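/- Fix s ∈ ℝ. Suppose φ : [−τ_N, 0] → ℂ^d is continuous and of bounded variation, and each D_j is continuous and of bounded variation on [s, s+τ_N]. Then the function f : [s, s+τ_N] → ℂ^d defined by f(t) := Σ_{ℓ : t−s < τ_ℓ ≤ τ_N} D_ℓ(t) φ(t − s − τ_ℓ) is right-continuous and of bounded variation on [s, s+τ_N], i.e. f ∈ BV_r([s, s+τ_N]). -/

import Mathlib

open MeasureTheory Set
open scoped ENNReal NNReal
open scoped Matrix.Norms.L2Operator

noncomputable section

-- The Lebesgue–Stieltjes measure of a monotone function (zero if not monotone).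
open scoped Classical in
noncomputable def monoMeasure (m : ℝ → ℝ) : Measure ℝ :=
  if h : Monotone m then h.stieltjesFunction.measure else 0

/-- The function `f` clamped to the interval `[c,e]`. -/
def clampOn (f : ℝ → ℝ) (c e : ℝ) : ℝ → ℝ := fun x => f (max c (min x e))

/-- Cumulative total variation of the clamped function. -/
def varFun (f : ℝ → ℝ) (c e : ℝ) : ℝ → ℝ :=
  fun x => (eVariationOn (clampOn f c e) (Icc c x)).toReal

/-- Positive (Jordan) part. -/
def posPartFun (f : ℝ → ℝ) (c e : ℝ) : ℝ → ℝ :=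
  fun x => (varFun f c e x + clampOn f c e x - f c) / 2

/-- Negative (Jordan) part. -/
def negPartFun (f : ℝ → ℝ) (c e : ℝ) : ℝ → ℝ :=
  fun x => (varFun f c e x - clampOn f c e x + f c) / 2

/-- Lebesgue–Stieltjes integral of `φ` against (the measure associated with the
restriction to `[c,e)` of) the function `f`, over `[c,e)`. -/
def lsIntIcoR (f : ℝ → ℝ) (c e : ℝ) (φ : ℝ → ℝ) : ℝ :=
  (∫ x in Ico c e, φ x ∂(monoMeasure (posPartFun f c e))) -
  (∫ x in Ico c e, φ x ∂(monoMeasure (negPartFun f c e)))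

/-- Same, over the open interval `(c,e)`. -/
def lsIntIooR (f : ℝ → ℝ) (c e : ℝ) (φ : ℝ → ℝ) : ℝ :=
  (∫ x in Ioo c e, φ x ∂(monoMeasure (posPartFun f c e))) -
  (∫ x in Ioo c e, φ x ∂(monoMeasure (negPartFun f c e)))

/-- Complex Lebesgue–Stieltjes integral `∫_{[c,e)} φ df`. -/
def lsIntIcoC (f : ℝ → ℂ) (c e : ℝ) (φ : ℝ → ℂ) : ℂ :=
  (lsIntIcoR (fun x => (f x).re) c e (fun x => (φ x).re)
    - lsIntIcoR (fun x => (f x).im) c e (fun x => (φ x).im))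
  + Complex.I * (lsIntIcoR (fun x => (f x).re) c e (fun x => (φ x).im)
    + lsIntIcoR (fun x => (f x).im) c e (fun x => (φ x).re))

def lsIntIooC (f : ℝ → ℂ) (c e : ℝ) (φ : ℝ → ℂ) : ℂ :=
  (lsIntIooR (fun x => (f x).re) c e (fun x => (φ x).re)
    - lsIntIooR (fun x => (f x).im) c e (fun x => (φ x).im))
  + Complex.I * (lsIntIooR (fun x => (f x).re) c e (fun x => (φ x).im)
    + lsIntIooR (fun x => (f x).im) c e (fun x => (φ x).re))

/-- `∫_{[c,e)} dF(τ) G(τ)` for matrix-valued `F` (the integrator) and `G`. -/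
def lsIntIcoMM {d : ℕ} (F : ℝ → Matrix (Fin d) (Fin d) ℂ) (c e : ℝ)
    (G : ℝ → Matrix (Fin d) (Fin d) ℂ) : Matrix (Fin d) (Fin d) ℂ :=
  Matrix.of fun i k => ∑ j, lsIntIcoC (fun τ => F τ i j) c e (fun τ => G τ j k)

/-- `∫_{[c,e)} dF(τ) g(τ)` for matrix-valued `F` and vector-valued `g`. -/
def lsIntIcoMV {d : ℕ} (F : ℝ → Matrix (Fin d) (Fin d) ℂ) (c e : ℝ)
    (g : ℝ → Fin d → ℂ) : Fin d → ℂ :=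
  fun i => ∑ j, lsIntIcoC (fun τ => F τ i j) c e (fun τ => g τ j)

def lsIntIooMV {d : ℕ} (F : ℝ → Matrix (Fin d) (Fin d) ℂ) (c e : ℝ)
    (g : ℝ → Fin d → ℂ) : Fin d → ℂ :=
  fun i => ∑ j, lsIntIooC (fun τ => F τ i j) c e (fun τ => g τ j)

instance matrixMeasurableSpace {d : ℕ} : MeasurableSpace (Matrix (Fin d) (Fin d) ℂ) :=
  inferInstanceAs (MeasurableSpace (Fin d → Fin d → ℂ))

/-- A Stieltjes–Volterra kernel of type `B^∞` on `[a,b] × [a,b]`. -/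
def IsSVKernel (d : ℕ) (a b : ℝ) (κ : ℝ → ℝ → Matrix (Fin d) (Fin d) ℂ) : Prop :=
  Measurable ((Icc a b ×ˢ Icc a b).restrict (fun p : ℝ × ℝ => κ p.1 p.2)) ∧
  (∀ t ∈ Icc a b, ∀ τ ∈ Icc a b, t ≤ τ → κ t τ = 0) ∧
  (∀ t ∈ Icc a b, ∀ x ∈ Icc a b, ContinuousWithinAt (κ t) (Icc a b ∩ Iio x) x) ∧
  (∃ C : ℝ, ∀ t ∈ Icc a b, eVariationOn (κ t) (Icc a b) ≤ ENNReal.ofReal C) ∧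
  (∀ ε > (0:ℝ), ∃ η > (0:ℝ), ∀ t ∈ Icc a b, ∀ τ ∈ Icc a b, 0 < t - τ → t - τ < η →
      eVariationOn (κ t) (Ico τ t) < ENNReal.ofReal ε)

/-- The norm `‖κ‖_{[a,b]} = sup_t ‖κ(t,·)‖_{BV([a,b])}` (base point `b`). -/
def KNorm (d : ℕ) (a b : ℝ) (κ : ℝ → ℝ → Matrix (Fin d) (Fin d) ℂ) : ℝ≥0∞ :=
  ⨆ t ∈ Icc a b, eVariationOn (κ t) (Icc a b)

/-- `ρ` is a resolvent of the kernel `κ`. -/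
def IsResolvent (d : ℕ) (a b : ℝ) (κ ρ : ℝ → ℝ → Matrix (Fin d) (Fin d) ℂ) : Prop :=
  IsSVKernel d a b ρ ∧
  ∀ t ∈ Icc a b, ∀ β ∈ Icc a b,
    ρ t β = -κ t β + lsIntIcoMM (κ t) β t (fun τ => ρ τ β)

/-- Reinterpret a vector of `Fin d → ℂ` as an element of `ℂ^d` with the
Euclidean norm (the types are definitionally equal). -/
def toEuc {d : ℕ} (v : Fin d → ℂ) : EuclideanSpace ℂ (Fin d) := WithLp.toLp 2 v


section AuxHelpers

variable {α : Type*} [LinearOrder α] {E F : Type*} [PseudoEMetricSpace E] [PseudoEMetricSpace F]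

lemma evar_le_of_edist_le {f : α → E} {g : α → F} {s : Set α}
    (h : ∀ x ∈ s, ∀ y ∈ s, edist (f x) (f y) ≤ edist (g x) (g y)) :
    eVariationOn f s ≤ eVariationOn g s := by
  refine iSup_le ?_
  rintro ⟨n, u, hu, us⟩
  calc (∑ i ∈ Finset.range n, edist (f (u (i + 1))) (f (u i)))
      ≤ ∑ i ∈ Finset.range n, edist (g (u (i + 1))) (g (u i)) :=
        Finset.sum_le_sum fun i _ => h _ (us _) _ (us _)
    _ ≤ eVariationOn g s := eVariationOn.sum_le (f := g) (n := n) hu us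

lemma evar_pair_le (f : α → E) (g : α → F) (s : Set α) :
    eVariationOn (fun x => (f x, g x)) s ≤ eVariationOn f s + eVariationOn g s := by
  refine iSup_le ?_
  rintro ⟨n, u, hu, us⟩
  calc (∑ i ∈ Finset.range n,
        edist ((f (u (i + 1)), g (u (i + 1))) : E × F) (f (u i), g (u i)))
      ≤ ∑ i ∈ Finset.range n,
          (edist (f (u (i + 1))) (f (u i)) + edist (g (u (i + 1))) (g (u i))) := by
        refine Finset.sum_le_sum fun i _ => ?_
        rw [Prod.edist_eq]
        exact max_le le_self_add le_add_self
    _ = (∑ i ∈ Finset.range n, edist (f (u (i + 1))) (f (u i))) +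
          ∑ i ∈ Finset.range n, edist (g (u (i + 1))) (g (u i)) := Finset.sum_add_distrib
    _ ≤ eVariationOn f s + eVariationOn g s :=
        add_le_add (eVariationOn.sum_le (f := f) (n := n) hu us) (eVariationOn.sum_le (f := g) (n := n) hu us)

lemma bv_pair {f : α → E} {g : α → F} {s : Set α}
    (hf : BoundedVariationOn f s) (hg : BoundedVariationOn g s) :
    BoundedVariationOn (fun x => (f x, g x)) s := by
  refine ne_top_of_le_ne_top ?_ (evar_pair_le f g s)
  exact ENNReal.add_ne_top.2 ⟨hf, hg⟩

lemma evar_add_le {G : Type*} [SeminormedAddCommGroup G] (f g : α → G) (s : Set α) :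
    eVariationOn (fun x => f x + g x) s ≤ eVariationOn f s + eVariationOn g s := by
  refine iSup_le ?_
  rintro ⟨n, u, hu, us⟩
  calc (∑ i ∈ Finset.range n, edist (f (u (i + 1)) + g (u (i + 1))) (f (u i) + g (u i)))
      ≤ ∑ i ∈ Finset.range n,
          (edist (f (u (i + 1))) (f (u i)) + edist (g (u (i + 1))) (g (u i))) :=
        Finset.sum_le_sum fun i _ => edist_add_add_le _ _ _ _
    _ = (∑ i ∈ Finset.range n, edist (f (u (i + 1))) (f (u i))) +
          ∑ i ∈ Finset.range n, edist (g (u (i + 1))) (g (u i)) := Finset.sum_add_distrib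
    _ ≤ eVariationOn f s + eVariationOn g s :=
        add_le_add (eVariationOn.sum_le (f := f) (n := n) hu us) (eVariationOn.sum_le (f := g) (n := n) hu us)

lemma bv_add {G : Type*} [SeminormedAddCommGroup G] {f g : α → G} {s : Set α}
    (hf : BoundedVariationOn f s) (hg : BoundedVariationOn g s) :
    BoundedVariationOn (fun x => f x + g x) s :=
  ne_top_of_le_ne_top (ENNReal.add_ne_top.2 ⟨hf, hg⟩) (evar_add_le f g s)

lemma bv_zero {G : Type*} [SeminormedAddCommGroup G] (s : Set α) :
    BoundedVariationOn (fun _ => (0 : G)) s := by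
  have : eVariationOn (fun _ => (0 : G)) s = 0 :=
    eVariationOn.constant_on (by rintro x ⟨a, _, rfl⟩ y ⟨b, _, rfl⟩; rfl)
  simp [BoundedVariationOn, this]

lemma bv_finsetSum {G : Type*} [SeminormedAddCommGroup G] {ι : Type*} (t : Finset ι)
    {f : ι → α → G} {s : Set α} (h : ∀ i ∈ t, BoundedVariationOn (f i) s) :
    BoundedVariationOn (fun x => ∑ i ∈ t, f i x) s := by
  classical
  induction t using Finset.induction_on with
  | empty => simpa using bv_zero s
  | @insert a u hnot ih =>
      simp only [Finset.sum_insert hnot]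
      exact bv_add (h a (Finset.mem_insert_self a u))
        (ih fun i hi => h i (Finset.mem_insert_of_mem hi))

lemma bv_bilin {E F G : Type*} [SeminormedAddCommGroup E] [SeminormedAddCommGroup F]
    [SeminormedAddCommGroup G] (B : E → F → G)
    (hB : ∀ (x₁ x₂ : E) (y₁ y₂ : F),
      dist (B x₁ y₁) (B x₂ y₂) ≤ ‖x₁‖ * dist y₁ y₂ + dist x₁ x₂ * ‖y₂‖)
    {f : α → E} {g : α → F} {s : Set α}
    (hf : BoundedVariationOn f s) (hg : BoundedVariationOn g s)
    {C : ℝ} (hfb : ∀ t ∈ s, ‖f t‖ ≤ C) (hgb : ∀ t ∈ s, ‖g t‖ ≤ C) :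
    BoundedVariationOn (fun t => B (f t) (g t)) s := by
  set C' : ℝ := max C 0 with hC'
  have hC'0 : 0 ≤ C' := le_max_right _ _
  set K : Set (E × F) := {p | ‖p.1‖ ≤ C' ∧ ‖p.2‖ ≤ C'} with hK
  have hlip : LipschitzOnWith (2 * C').toNNReal (fun p : E × F => B p.1 p.2) K := by
    rw [lipschitzOnWith_iff_dist_le_mul]
    rintro p ⟨hp1, _⟩ q ⟨_, hq2⟩
    have h1 : dist p.2 q.2 ≤ dist p q := by rw [Prod.dist_eq]; exact le_max_right _ _
    have h2 : dist p.1 q.1 ≤ dist p q := by rw [Prod.dist_eq]; exact le_max_left _ _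
    calc dist (B p.1 p.2) (B q.1 q.2)
        ≤ ‖p.1‖ * dist p.2 q.2 + dist p.1 q.1 * ‖q.2‖ := hB _ _ _ _
      _ ≤ C' * dist p q + dist p q * C' := by
          have := dist_nonneg (x := p) (y := q)
          nlinarith [dist_nonneg (x := p.2) (y := q.2), dist_nonneg (x := p.1) (y := q.1),
            norm_nonneg p.1, norm_nonneg q.2]
      _ = 2 * C' * dist p q := by ring
      _ = ((2 * C').toNNReal : ℝ) * dist p q := by
          rw [Real.coe_toNNReal _ (by positivity)]
  have hmaps : Set.MapsTo (fun t => ((f t, g t) : E × F)) s K := fun t ht =>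
    ⟨(hfb t ht).trans (le_max_left _ _), (hgb t ht).trans (le_max_left _ _)⟩
  exact hlip.comp_boundedVariationOn hmaps (bv_pair hf hg)

end AuxHelpers

lemma dist_mulVec {d : ℕ} (A₁ A₂ : Matrix (Fin d) (Fin d) ℂ) (v₁ v₂ : EuclideanSpace ℂ (Fin d)) :
    dist (toEuc (A₁.mulVec v₁)) (toEuc (A₂.mulVec v₂)) ≤ ‖A₁‖ * dist v₁ v₂ + dist A₁ A₂ * ‖v₂‖ := by
  have h1 : toEuc (A₁.mulVec v₁) = Matrix.toEuclideanCLM (𝕜 := ℂ) A₁ v₁ := rfl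
  have h2 : toEuc (A₂.mulVec v₂) = Matrix.toEuclideanCLM (𝕜 := ℂ) A₂ v₂ := rfl
  have h3 : ‖A₁‖ = ‖Matrix.toEuclideanCLM (𝕜 := ℂ) A₁‖ := rfl
  have h4 : dist A₁ A₂ = dist (Matrix.toEuclideanCLM (𝕜 := ℂ) A₁)
      (Matrix.toEuclideanCLM (𝕜 := ℂ) A₂) := rfl
  rw [h1, h2, h3, h4]
  set T₁ := Matrix.toEuclideanCLM (𝕜 := ℂ) A₁
  set T₂ := Matrix.toEuclideanCLM (𝕜 := ℂ) A₂
  calc dist (T₁ v₁) (T₂ v₂) ≤ dist (T₁ v₁) (T₁ v₂) + dist (T₁ v₂) (T₂ v₂) := dist_triangle _ _ _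
    _ ≤ ‖T₁‖ * dist v₁ v₂ + dist T₁ T₂ * ‖v₂‖ := by
        gcongr
        · rw [dist_eq_norm, dist_eq_norm, ← map_sub]
          exact T₁.le_opNorm _
        · rw [dist_eq_norm, dist_eq_norm, ← ContinuousLinearMap.sub_apply]
          exact (T₁ - T₂).le_opNorm _

lemma dist_smulE {d : ℕ} (a₁ a₂ : ℝ) (v₁ v₂ : EuclideanSpace ℂ (Fin d)) :
    dist (a₁ • v₁) (a₂ • v₂) ≤ ‖a₁‖ * dist v₁ v₂ + dist a₁ a₂ * ‖v₂‖ := by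
  calc dist (a₁ • v₁) (a₂ • v₂) ≤ dist (a₁ • v₁) (a₁ • v₂) + dist (a₁ • v₂) (a₂ • v₂) :=
        dist_triangle _ _ _
    _ ≤ ‖a₁‖ * dist v₁ v₂ + dist a₁ a₂ * ‖v₂‖ := by
        gcongr
        · rw [dist_eq_norm, dist_eq_norm, ← smul_sub, norm_smul]
        · rw [dist_eq_norm, dist_eq_norm, ← sub_smul, norm_smul]

lemma norm_mulVec_le {d : ℕ} (A : Matrix (Fin d) (Fin d) ℂ) (v : EuclideanSpace ℂ (Fin d)) :
    ‖toEuc (A.mulVec v)‖ ≤ ‖A‖ * ‖v‖ := A.l2_opNorm_mulVec v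

/-- Indicator of `Iio c`. -/
def indChi (c : ℝ) : ℝ → ℝ := fun t => if t < c then (1 : ℝ) else 0

/-- `t ↦ min (t - c) 0`. -/
def clampNeg (c : ℝ) : ℝ → ℝ := fun t => min (t - c) 0

/-- One summand of the forcing term, written in a globally defined form. -/
def termFun {d : ℕ} (Dl : ℝ → Matrix (Fin d) (Fin d) ℂ)
    (φ : ℝ → EuclideanSpace ℂ (Fin d)) (c : ℝ) : ℝ → EuclideanSpace ℂ (Fin d) :=
  fun t => indChi c t • toEuc ((Dl t).mulVec (φ (clampNeg c t)))

lemma bv_termFun {d : ℕ} {Dl : ℝ → Matrix (Fin d) (Fin d) ℂ}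
    {φ : ℝ → EuclideanSpace ℂ (Fin d)} {a b c lo : ℝ}
    (hab : a ≤ b) (hlo : lo ≤ a - c) (hlo0 : lo ≤ 0)
    (hDc : Continuous Dl) (hDbv : BoundedVariationOn Dl (Icc a b))
    (hφcont : ContinuousOn φ (Icc lo 0)) (hφbv : BoundedVariationOn φ (Icc lo 0)) :
    BoundedVariationOn (termFun Dl φ c) (Icc a b) := by
  have hmono' : Monotone fun t : ℝ => t - c := fun x y h => sub_le_sub_right h c
  have hmono : Monotone (clampNeg c) := hmono'.min monotone_const
  have hmaps : MapsTo (clampNeg c) (Icc a b) (Icc lo 0) := by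
    intro t ht
    simp only [clampNeg, mem_Icc]
    exact ⟨le_min (by have := ht.1; linarith) hlo0, min_le_right _ _⟩
  have hφm : BoundedVariationOn (fun t => φ (clampNeg c t)) (Icc a b) :=
    ne_top_of_le_ne_top hφbv
      (eVariationOn.comp_le_of_monotoneOn φ (clampNeg c) (hmono.monotoneOn _) hmaps)
  obtain ⟨CD, hCD⟩ := isCompact_Icc.exists_bound_of_continuousOn (s := Icc a b) hDc.continuousOn
  obtain ⟨Cφ, hCφ⟩ := isCompact_Icc.exists_bound_of_continuousOn (s := Icc lo 0) hφcont
  have hCD0 : 0 ≤ CD := le_trans (norm_nonneg _) (hCD a (left_mem_Icc.2 hab))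
  have hCφ0 : 0 ≤ Cφ := le_trans (norm_nonneg _) (hCφ 0 (right_mem_Icc.2 hlo0))
  have hw : BoundedVariationOn (fun t => toEuc ((Dl t).mulVec (φ (clampNeg c t)))) (Icc a b) :=
    bv_bilin _ dist_mulVec hDbv hφm (C := max CD Cφ)
      (fun t ht => (hCD t ht).trans (le_max_left _ _))
      (fun t ht => (hCφ _ (hmaps ht)).trans (le_max_right _ _))
  have hχbv : BoundedVariationOn (indChi c) (Icc a b) := by
    set ind : ℝ → ℝ := fun t => if t < c then (0 : ℝ) else 1 with hind
    have hmono2 : Monotone ind := by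
      intro x y hxy
      simp only [hind]
      split_ifs with h1 h2 h3
      · exact le_rfl
      · exact zero_le_one
      · exact absurd (lt_of_le_of_lt hxy h3) h1
      · exact le_rfl
    have h1 : eVariationOn (indChi c) (Icc a b) ≤ eVariationOn ind (Icc a b) := by
      refine evar_le_of_edist_le fun x _ y _ => ?_
      rw [edist_dist, edist_dist, Real.dist_eq, Real.dist_eq]
      have hxy : indChi c x - indChi c y = ind y - ind x := by
        simp only [indChi, hind]; split_ifs <;> ring
      rw [hxy, abs_sub_comm]
    have h2 : eVariationOn ind (Icc a b) ≠ ⊤ := by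
      have h3 := (hmono2.monotoneOn (Icc a b)).eVariationOn_le
        (left_mem_Icc.2 hab) (right_mem_Icc.2 hab)
      rw [inter_self] at h3
      exact ne_top_of_le_ne_top ENNReal.ofReal_ne_top h3
    exact ne_top_of_le_ne_top h2 h1
  refine bv_bilin (fun (x : ℝ) (v : EuclideanSpace ℂ (Fin d)) => x • v) dist_smulE hχbv hw
    (C := max 1 (CD * Cφ)) (fun t ht => ?_) (fun t ht => ?_)
  · refine le_trans ?_ (le_max_left _ _)
    simp only [indChi, Real.norm_eq_abs]
    split_ifs <;> simp
  · refine le_trans ((norm_mulVec_le _ _).trans ?_) (le_max_right _ _)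
    exact mul_le_mul (hCD t ht) (hCφ _ (hmaps ht)) (norm_nonneg _) hCD0

lemma rc_termFun {d : ℕ} {Dl : ℝ → Matrix (Fin d) (Fin d) ℂ}
    {φ : ℝ → EuclideanSpace ℂ (Fin d)} {a c lo : ℝ} {t : ℝ}
    (hta : a ≤ t) (hlo : lo ≤ a - c) (hlo0 : lo ≤ 0)
    (hDc : Continuous Dl) (hφcont : ContinuousOn φ (Icc lo 0)) :
    ContinuousWithinAt (termFun Dl φ c) (Ioi t) t := by
  by_cases hct : t < c
  · have hmem : Iio c ∈ nhds t := Iio_mem_nhds hct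
    rw [← continuousWithinAt_inter hmem]
    have hclamp : ∀ x, a ≤ x → clampNeg c x ∈ Icc lo 0 := by
      intro x hx
      simp only [clampNeg, mem_Icc]
      exact ⟨le_min (by linarith) hlo0, min_le_right _ _⟩
    have hφm : ContinuousWithinAt (fun x => φ (clampNeg c x)) (Ioi t ∩ Iio c) t := by
      refine ContinuousWithinAt.comp (hφcont _ (hclamp t hta)) ?_ ?_
      · exact ((continuous_id.sub continuous_const).min continuous_const).continuousWithinAt
      · exact fun x hx => hclamp x (le_of_lt (lt_of_le_of_lt hta hx.1))
    have hG : Continuous (fun p : Matrix (Fin d) (Fin d) ℂ × EuclideanSpace ℂ (Fin d) =>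
        toEuc (p.1.mulVec ((EuclideanSpace.equiv (Fin d) ℂ) p.2))) :=
      ((EuclideanSpace.equiv (Fin d) ℂ).symm.continuous).comp
        (continuous_fst.matrix_mulVec
          ((EuclideanSpace.equiv (Fin d) ℂ).continuous.comp continuous_snd))
    have hw : ContinuousWithinAt (fun x => toEuc ((Dl x).mulVec (φ (clampNeg c x))))
        (Ioi t ∩ Iio c) t :=
      by
        have hp : ContinuousWithinAt (fun x => (Dl x, φ (clampNeg c x))) (Ioi t ∩ Iio c) t :=
          ContinuousWithinAt.prodMk (hDc.continuousWithinAt (s := Ioi t ∩ Iio c) (x := t)) hφm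
        have h := ContinuousAt.comp_continuousWithinAt (f := fun x => (Dl x, φ (clampNeg c x)))
          hG.continuousAt hp
        exact h
    refine hw.congr (fun x hx => ?_) ?_
    · have hx2 : x < c := hx.2
      simp [termFun, indChi, hx2]
    · simp [termFun, indChi, hct]
  · refine (continuousWithinAt_const (b := (0 : EuclideanSpace ℂ (Fin d)))).congr
      (fun x hx => ?_) ?_
    · have hx1 : t < x := hx
      have hxc : ¬ x < c := fun h => hct (lt_of_le_of_lt (le_of_lt hx1) h)
      simp [termFun, indChi, hxc]
    · simp [termFun, indChi, hct]


/-- **The forcing term built from the initial data is right-continuous and of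
bounded variation.**

If `φ` is continuous and of bounded variation on `[-τ_N, 0]` and each `D_j` is
continuous and of bounded variation on `[s, s+τ_N]`, then
`f(t) = ∑_{ℓ : t-s < τ_ℓ ≤ τ_N} D_ℓ(t) φ(t - s - τ_ℓ)` belongs to
`BV_r([s, s+τ_N])`. -/
theorem forcing_term_right_continuous_bounded_variation
    (d N : ℕ) (hd : 0 < d)
    (τ : Fin (N + 1) → ℝ) (hτpos : ∀ j, 0 < τ j) (hτmono : StrictMono τ)
    (D : Fin (N + 1) → ℝ → Matrix (Fin d) (Fin d) ℂ) (hD : ∀ j, Continuous (D j))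
    (s : ℝ)
    (hDbv : ∀ j, BoundedVariationOn (D j) (Icc s (s + τ (Fin.last N))))
    (φ : ℝ → EuclideanSpace ℂ (Fin d))
    (hφcont : ContinuousOn φ (Icc (-(τ (Fin.last N))) 0))
    (hφbv : BoundedVariationOn φ (Icc (-(τ (Fin.last N))) 0))
    (f : ℝ → EuclideanSpace ℂ (Fin d))
    (hf : f = fun t => ∑ ℓ, if t - s < τ ℓ then
      toEuc ((D ℓ t).mulVec (φ (t - s - τ ℓ))) else 0) :
    (∀ t ∈ Icc s (s + τ (Fin.last N)), ContinuousWithinAt f (Ioi t) t) ∧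
    BoundedVariationOn f (Icc s (s + τ (Fin.last N))) := by
  classical
  have hT0 : 0 < τ (Fin.last N) := hτpos _
  have hτT : ∀ ℓ, τ ℓ ≤ τ (Fin.last N) := fun ℓ => hτmono.monotone (Fin.le_last ℓ)
  have hfg : f = fun t => ∑ ℓ, termFun (D ℓ) φ (s + τ ℓ) t := by
    rw [hf]; funext t
    refine Finset.sum_congr rfl fun ℓ _ => ?_
    by_cases h : t - s < τ ℓ
    · have htc : t < s + τ ℓ := by linarith
      have hm : clampNeg (s + τ ℓ) t = t - s - τ ℓ := by
        simp only [clampNeg]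
        rw [min_eq_left (by linarith), sub_add_eq_sub_sub]
      rw [if_pos h]
      simp [termFun, indChi, htc, hm]
    · have htc : ¬ t < s + τ ℓ := by intro hh; exact h (by linarith)
      rw [if_neg h]
      simp [termFun, indChi, htc]
  constructor
  · intro t ht
    rw [hfg]
    refine tendsto_finset_sum _ fun ℓ _ => ?_
    exact rc_termFun ht.1 (by linarith [hτT ℓ]) (by linarith) (hD ℓ) hφcont
  · rw [hfg]
    refine bv_finsetSum Finset.univ fun ℓ _ => ?_
    exact bv_termFun (by linarith) (by linarith [hτT ℓ]) (by linarith) (hD ℓ) (hDbv ℓ)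
      hφcont hφbv


end
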